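/- Let x be a word (list) over an alphabet Σ and let i ≤ j be indices with j < |x|. Then the word obtained from x by deleting the symbol at position i equals the word obtained from x by deleting the symbol at position j if and only if all the symbols of x at positions i, i+1, …, j are equal (i.e., positions i through j lie in a single run of x). In particular, deleting any symbol of a run yields the same word, so two deletions occurring in copies of the same run of a transmitted word produce identical channel outputs and the deleted position cannot be recovered. -/

import Mathlib

/-- For a word `x` and indices `i ≤ j < |x|`, deleting position
`i` from `x` yields the same word as deleting position `j` from `x` iff all the
symbols of `x` at positions `i, i+1, …, j` are equal (i.e. positions `i` through
`j` lie in a single run of `x`). -/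
theorem eraseIdx_eq_eraseIdx_iff_run {α : Type*} (x : List α) (i j : ℕ)
    (hij : i ≤ j) (hj : j < x.length) :
    x.eraseIdx i = x.eraseIdx j ↔
      ∀ k (hik : i ≤ k) (hkj : k ≤ j),
        x[k]'(lt_of_le_of_lt hkj hj) = x[i]'(lt_of_le_of_lt hij hj) := by
  have hi : i < x.length := lt_of_le_of_lt hij hj
  have hleni : (x.eraseIdx i).length = x.length - 1 := List.length_eraseIdx_of_lt hi
  have hlenj : (x.eraseIdx j).length = x.length - 1 := List.length_eraseIdx_of_lt hj
  constructor
  · intro h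
    -- step: for i ≤ k < j, x[k+1] = x[k]
    have step : ∀ k, i ≤ k → k < j → ∀ (h1 : k + 1 < x.length) (h2 : k < x.length),
        x[k+1] = x[k] := by
      intro k hik hkj h1 h2
      have hk : k < (x.eraseIdx i).length := by
        rw [hleni]; omega
      have e1 : (x.eraseIdx i)[k] = x[k+1] :=
        List.getElem_eraseIdx_of_ge hk hik
      have hk' : k < (x.eraseIdx j).length := by rw [hlenj]; omega
      have e2 : (x.eraseIdx j)[k] = x[k] :=
        List.getElem_eraseIdx_of_lt hk' hkj
      calc x[k+1] = (x.eraseIdx i)[k] := e1.symm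
        _ = (x.eraseIdx j)[k] := by simp [h]
        _ = x[k] := e2
    intro k hik hkj
    induction k with
    | zero =>
        have : i = 0 := Nat.le_zero.mp hik
        subst this; rfl
    | succ n ih =>
        rcases Nat.lt_or_ge i (n+1) with hlt | hge
        · have hin : i ≤ n := Nat.lt_succ_iff.mp hlt
          have hnj : n < j := hkj
          have := step n hin hnj (lt_of_le_of_lt hkj hj) (by omega)
          rw [this]
          exact ih hin (by omega)
        · have : i = n + 1 := le_antisymm hik hge
          subst this; rfl
  · intro h
    apply List.ext_getElem
    · rw [hleni, hlenj]
    · intro k hk1 hk2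
      rcases Nat.lt_or_ge k i with hki | hki
      · rw [List.getElem_eraseIdx_of_lt hk1 hki,
            List.getElem_eraseIdx_of_lt hk2 (by omega)]
      · rw [List.getElem_eraseIdx_of_ge hk1 hki]
        rcases Nat.lt_or_ge k j with hkj | hkj
        · rw [List.getElem_eraseIdx_of_lt hk2 hkj]
          rw [h (k+1) (by omega) (by omega), h k hki (by omega)]
        · rw [List.getElem_eraseIdx_of_ge hk2 hkj]
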